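/- In the setting of Proposition 2 of the paper: let x ∈ x_0 + K_k(g_0,H), let q_0,...,q_{k-1} be nonzero multiples of the conjugate directions q̂_i, let Q = (q_{k-1} ... q_0), and let B = σ(I - Q(Q^TQ)^{-1}Q^T) + HQ(Q^THQ)^{-1}Q^TH with σ > 0. Then the unique solution p of B p = -(Hx + c) is p = (1/σ)(-ĝ_k + ((ĝ_k^T H q_{k-1})/(q_{k-1}^T H q_{k-1})) q_{k-1}) + Σ_{i=0}^{k-1} (-( (Hx+c)^T q_i )/(q_i^T H q_i)) q_i, where ĝ_k is the gradient at the minimizer of f over x_0 + K_k(g_0,H). -/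

import Mathlib

open Matrix

def krylov {n : ℕ} (b : Fin n → ℝ) (A : Matrix (Fin n) (Fin n) ℝ) (k : ℕ) :
    Submodule ℝ (Fin n → ℝ) :=
  Submodule.span ℝ (Set.range fun i : Fin k => (A ^ (i : ℕ)).mulVec b)

lemma krylov_mono {n : ℕ} (b : Fin n → ℝ) (A : Matrix (Fin n) (Fin n) ℝ) {j m : ℕ} (h : j ≤ m) :
    krylov b A j ≤ krylov b A m := by
  apply Submodule.span_mono
  rintro _ ⟨i, rfl⟩
  exact ⟨⟨i, lt_of_lt_of_le i.2 h⟩, rfl⟩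

lemma self_mem_krylov {n : ℕ} (b : Fin n → ℝ) (A : Matrix (Fin n) (Fin n) ℝ) {m : ℕ} (h : 1 ≤ m) :
    b ∈ krylov b A m := by
  apply Submodule.subset_span
  exact ⟨⟨0, h⟩, by simp⟩

lemma mulVec_mem_krylov {n : ℕ} (b : Fin n → ℝ) (A : Matrix (Fin n) (Fin n) ℝ) {m : ℕ}
    {v : Fin n → ℝ} (hv : v ∈ krylov b A m) : A.mulVec v ∈ krylov b A (m + 1) := by
  induction hv using Submodule.span_induction with
  | mem x hx =>
    obtain ⟨i, rfl⟩ := hx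
    apply Submodule.subset_span
    refine ⟨⟨(i : ℕ) + 1, by omega⟩, ?_⟩
    rw [Matrix.mulVec_mulVec, ← pow_succ']
  | zero => simp [Matrix.mulVec_zero]
  | add x y _ _ hx hy => rw [Matrix.mulVec_add]; exact Submodule.add_mem _ hx hy
  | smul a x _ hx => rw [Matrix.mulVec_smul]; exact Submodule.smul_mem _ _ hx

lemma dot_mulVec_symm {n : ℕ} {H : Matrix (Fin n) (Fin n) ℝ} (hs : Hᵀ = H) (v w : Fin n → ℝ) :
    v ⬝ᵥ H.mulVec w = w ⬝ᵥ H.mulVec v := by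
  rw [Matrix.dotProduct_mulVec, ← Matrix.vecMul_transpose, hs]
  exact dotProduct_comm _ _

lemma quad_expand {n : ℕ} (H : Matrix (Fin n) (Fin n) ℝ) (hs : Hᵀ = H) (c z d : Fin n → ℝ) :
    (1/2)*((z + d) ⬝ᵥ H.mulVec (z + d)) + c ⬝ᵥ (z + d) =
      ((1/2)*(z ⬝ᵥ H.mulVec z) + c ⬝ᵥ z) + (H.mulVec z + c) ⬝ᵥ d
        + (1/2)*(d ⬝ᵥ H.mulVec d) := by
  have hsym : H.mulVec z ⬝ᵥ d = z ⬝ᵥ H.mulVec d := by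
    rw [dotProduct_comm]; exact dot_mulVec_symm hs d z
  have hcomm : d ⬝ᵥ H.mulVec z = H.mulVec z ⬝ᵥ d := dotProduct_comm _ _
  simp only [Matrix.mulVec_add, dotProduct_add, add_dotProduct]
  linear_combination (-1/2) * hsym + (1/2) * hcomm

lemma grad_orth_of_min {n : ℕ} (H : Matrix (Fin n) (Fin n) ℝ) (hH : H.PosDef)
    (hs : Hᵀ = H) (c z v : Fin n → ℝ)
    (hmin : ∀ s : ℝ, (1/2)*(z ⬝ᵥ H.mulVec z) + c ⬝ᵥ z ≤
      (1/2)*((z + s • v) ⬝ᵥ H.mulVec (z + s • v)) + c ⬝ᵥ (z + s • v)) :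
    (H.mulVec z + c) ⬝ᵥ v = 0 := by
  set a := (H.mulVec z + c) ⬝ᵥ v with ha
  set b := v ⬝ᵥ H.mulVec v with hb
  have key : ∀ s : ℝ, 0 ≤ s * a + s^2 * (1/2) * b := by
    intro s
    have h := hmin s
    have expand := quad_expand H hs c z (s • v)
    rw [expand] at h
    have h1 : (H.mulVec z + c) ⬝ᵥ (s • v) = s * a := by
      rw [dotProduct_smul, smul_eq_mul]
    have h2 : (1/2)*((s • v) ⬝ᵥ H.mulVec (s • v)) = s^2 * (1/2) * b := by
      rw [Matrix.mulVec_smul, dotProduct_smul, smul_dotProduct, smul_eq_mul, smul_eq_mul, hb]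
      ring
    rw [h1, h2] at h
    linarith
  by_cases hv : v = 0
  · simp [ha, hv]
  · have hbpos : 0 < b := by simpa [hb] using hH.dotProduct_mulVec_pos hv
    have hb' : b ≠ 0 := ne_of_gt hbpos
    have h1 := key (-(a/b))
    have h2 : -(a/b) * a + (-(a/b))^2 * (1/2) * b = -(a^2/(2*b)) := by
      field_simp; ring
    rw [h2] at h1
    have h5 : a^2/(2*b) ≤ 0 := by linarith
    have h6 : a^2 ≤ 0 := by
      by_contra hc; push_neg at hc
      have : 0 < a^2/(2*b) := div_pos hc (by linarith)
      linarith
    nlinarith [sq_nonneg a]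

lemma sum_smul_dot {n k : ℕ} (gg : Fin k → ℝ) (q : Fin k → Fin n → ℝ) (w : Fin n → ℝ) :
    (∑ i, gg i • q i) ⬝ᵥ w = ∑ i, gg i * (q i ⬝ᵥ w) := by
  simp only [dotProduct, Finset.sum_apply, Pi.smul_apply, smul_eq_mul, Finset.sum_mul,
    Finset.mul_sum]
  rw [Finset.sum_comm]
  exact Finset.sum_congr rfl fun i _ => Finset.sum_congr rfl fun a _ => by ring
theorem full_memory_qn_step {n : ℕ}
    (H : Matrix (Fin n) (Fin n) ℝ) (hH : H.PosDef)
    (c x0 : Fin n → ℝ) (g0 : Fin n → ℝ) (hg0 : g0 = H.mulVec x0 + c)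
    (f : (Fin n → ℝ) → ℝ)
    (hf : ∀ x, f x = (1 / 2) * (x ⬝ᵥ H.mulVec x) + c ⬝ᵥ x)
    (xhat : ℕ → (Fin n → ℝ))
    (hmem : ∀ j : ℕ, xhat j - x0 ∈ krylov g0 H j)
    (hmin : ∀ j : ℕ, ∀ y : Fin n → ℝ, y - x0 ∈ krylov g0 H j → f (xhat j) ≤ f y)
    (k : ℕ) (hk : 1 ≤ k)
    (hdim : Module.finrank ℝ (krylov g0 H k) = k)
    (ghat : Fin n → ℝ) (hghat : ghat = H.mulVec (xhat k) + c) (hgne : ghat ≠ 0)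
    (q : Fin k → (Fin n → ℝ)) (lam : Fin k → ℝ) (hlam : ∀ i, lam i ≠ 0)
    (hq : ∀ i : Fin k, q i = lam i • (xhat ((i : ℕ) + 1) - xhat (i : ℕ)))
    (Q : Matrix (Fin n) (Fin k) ℝ) (hQ : ∀ i j, Q i j = q (Fin.rev j) i)
    (σ : ℝ) (hσ : 0 < σ)
    (B : Matrix (Fin n) (Fin n) ℝ)
    (hB : B = σ • (1 - Q * (Qᵀ * Q)⁻¹ * Qᵀ) + H * Q * (Qᵀ * H * Q)⁻¹ * Qᵀ * H)
    (x : Fin n → ℝ) (hx : x - x0 ∈ krylov g0 H k)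
    (qlast : Fin n → ℝ) (hqlast : qlast = q ⟨k - 1, by omega⟩) :
    ∀ p : Fin n → ℝ,
      B.mulVec p = -(H.mulVec x + c) ↔
        p = (1 / σ) •
              (-ghat + ((ghat ⬝ᵥ H.mulVec qlast) / (qlast ⬝ᵥ H.mulVec qlast)) • qlast) +
            ∑ i : Fin k,
              (-((H.mulVec x + c) ⬝ᵥ q i) / (q i ⬝ᵥ H.mulVec (q i))) • q i := by
  have hs : Hᵀ = H := by have := hH.1; rw [Matrix.IsHermitian] at this; simpa using this
  have hσ' : σ ≠ 0 := ne_of_gt hσ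
  set g : Fin n → ℝ := H.mulVec x + c with hg
  -- gradient at xhat m is orthogonal to krylov space m
  have horth : ∀ m : ℕ, ∀ v ∈ krylov g0 H m, (H.mulVec (xhat m) + c) ⬝ᵥ v = 0 := by
    intro m v hv
    apply grad_orth_of_min H hH hs
    intro s
    have hy : xhat m + s • v - x0 ∈ krylov g0 H m := by
      have : xhat m + s • v - x0 = (xhat m - x0) + s • v := by abel
      rw [this]
      exact Submodule.add_mem _ (hmem m) (Submodule.smul_mem _ _ hv)
    have := hmin m (xhat m + s • v) hy
    rw [hf, hf] at this
    exact this
  -- membership of q i in Krylov spaces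
  have hqmem : ∀ i : Fin k, ∀ m : ℕ, (i : ℕ) + 1 ≤ m → q i ∈ krylov g0 H m := by
    intro i m him
    rw [hq]
    apply Submodule.smul_mem
    have h1 : xhat ((i : ℕ) + 1) - xhat (i : ℕ)
        = (xhat ((i : ℕ) + 1) - x0) - (xhat (i : ℕ) - x0) := by abel
    rw [h1]
    exact Submodule.sub_mem _ (krylov_mono _ _ him (hmem _))
      (krylov_mono _ _ (by omega) (hmem _))
  have hqmemk : ∀ i : Fin k, q i ∈ krylov g0 H k := fun i => hqmem i k i.2
  -- H *ᵥ q i in Krylov space i+2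
  have hHqmem : ∀ i : Fin k, ∀ m : ℕ, (i : ℕ) + 2 ≤ m → H.mulVec (q i) ∈ krylov g0 H m := by
    intro i m him
    exact krylov_mono _ _ him (mulVec_mem_krylov _ _ (hqmem i _ le_rfl))
  -- conjugacy
  have hconj : ∀ i j : Fin k, i ≠ j → q i ⬝ᵥ H.mulVec (q j) = 0 := by
    have key : ∀ i j : Fin k, (i : ℕ) < (j : ℕ) → q i ⬝ᵥ H.mulVec (q j) = 0 := by
      intro i j hij
      have hHqj : H.mulVec (q j) = lam j •
          ((H.mulVec (xhat ((j : ℕ) + 1)) + c) - (H.mulVec (xhat (j : ℕ)) + c)) := by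
        rw [hq j, Matrix.mulVec_smul, Matrix.mulVec_sub]
        congr 1
        abel
      rw [hHqj, dotProduct_smul, dotProduct_sub]
      have h1 : (H.mulVec (xhat ((j : ℕ) + 1)) + c) ⬝ᵥ q i = 0 :=
        horth _ _ (hqmem i _ (by omega))
      have h2 : (H.mulVec (xhat (j : ℕ)) + c) ⬝ᵥ q i = 0 :=
        horth _ _ (hqmem i _ (by omega))
      rw [dotProduct_comm (q i), dotProduct_comm (q i), h1, h2]
      simp
    intro i j hij
    rcases lt_or_gt_of_ne (fun h => hij (Fin.ext h) : (i : ℕ) ≠ (j : ℕ)) with h | h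
    · exact key i j h
    · rw [dot_mulVec_symm hs]; exact key j i h
  -- ghat orthogonal to K_k
  have hgorth : ∀ v ∈ krylov g0 H k, ghat ⬝ᵥ v = 0 := by
    intro v hv; rw [hghat]; exact horth k v hv
  -- q i nonzero
  have hqne : ∀ i : Fin k, q i ≠ 0 := by
    intro i hqi
    have hdiff : xhat ((i : ℕ) + 1) = xhat (i : ℕ) := by
      have := hq i
      rw [hqi] at this
      have h2 : xhat ((i : ℕ) + 1) - xhat (i : ℕ) = 0 := by
        rcases smul_eq_zero.mp this.symm with h | h
        · exact absurd h (hlam i)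
        · exact h
      exact sub_eq_zero.mp h2
    have hgi0 : H.mulVec (xhat (i : ℕ)) + c = 0 := by
      set gi := H.mulVec (xhat (i : ℕ)) + c with hgi
      have hmemgi : gi ∈ krylov g0 H ((i : ℕ) + 1) := by
        have h1 : gi = g0 + H.mulVec (xhat (i : ℕ) - x0) := by
          rw [hgi, hg0, Matrix.mulVec_sub]; abel
        rw [h1]
        exact Submodule.add_mem _ (self_mem_krylov _ _ (by omega))
          (mulVec_mem_krylov _ _ (hmem (i : ℕ)))
      have h3 := horth ((i : ℕ) + 1) gi hmemgi
      rw [hdiff] at h3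
      exact dotProduct_self_eq_zero.mp h3
    have hd : xhat k = xhat (i : ℕ) := by
      have hle : f (xhat k) ≤ f (xhat (i : ℕ)) :=
        hmin k _ (krylov_mono _ _ (by omega : (i : ℕ) ≤ k) (hmem (i : ℕ)))
      have hexp := quad_expand H hs c (xhat (i : ℕ)) (xhat k - xhat (i : ℕ))
      rw [add_sub_cancel, hgi0, zero_dotProduct] at hexp
      rw [hf, hf, hexp] at hle
      by_contra hne
      have hne' : xhat k - xhat (i : ℕ) ≠ 0 := sub_ne_zero.mpr hne
      have := hH.dotProduct_mulVec_pos hne'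
      simp only [star_trivial] at this
      have hpos : 0 < (xhat k - xhat (i : ℕ)) ⬝ᵥ H.mulVec (xhat k - xhat (i : ℕ)) := by
        simpa using hH.dotProduct_mulVec_pos hne'
      linarith
    exact hgne (by rw [hghat, hd, hgi0])
  -- positivity of conjugate diagonal
  have hdpos : ∀ i : Fin k, 0 < q i ⬝ᵥ H.mulVec (q i) := by
    intro i; simpa using hH.dotProduct_mulVec_pos (hqne i)
  have hdne : ∀ i : Fin k, q i ⬝ᵥ H.mulVec (q i) ≠ 0 := fun i => ne_of_gt (hdpos i)
  -- linear independence of q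
  have hind : LinearIndependent ℝ q := by
    rw [Fintype.linearIndependent_iff]
    intro gg hgg j
    have h1 : (∑ i, gg i • q i) ⬝ᵥ H.mulVec (q j) = 0 := by rw [hgg, zero_dotProduct]
    rw [sum_smul_dot] at h1
    have h2 : ∀ i ∈ Finset.univ, i ≠ j → gg i * (q i ⬝ᵥ H.mulVec (q j)) = 0 := by
      intro i _ hij
      rw [hconj i j hij, mul_zero]
    rw [Finset.sum_eq_single_of_mem j (Finset.mem_univ j) (fun i hi hij => h2 i hi hij)] at h1
    exact (mul_eq_zero.mp h1).resolve_right (hdne j)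
  -- span of q equals Krylov space
  have hspan : krylov g0 H k = Submodule.span ℝ (Set.range q) := by
    have hle : Submodule.span ℝ (Set.range q) ≤ krylov g0 H k := by
      rw [Submodule.span_le]
      rintro _ ⟨i, rfl⟩
      exact hqmemk i
    refine (Submodule.eq_of_le_of_finrank_le hle ?_).symm
    rw [hdim, finrank_span_eq_card hind, Fintype.card_fin]
  set α := (ghat ⬝ᵥ H.mulVec qlast) / (qlast ⬝ᵥ H.mulVec qlast) with hα
  set β : Fin k → ℝ := fun i => -(g ⬝ᵥ q i) / (q i ⬝ᵥ H.mulVec (q i)) with hβ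
  -- the correction term equals xhat k - x
  have hw : ∑ i, β i • q i = xhat k - x := by
    have hxk : xhat k - x ∈ krylov g0 H k := by
      have h1 : xhat k - x = (xhat k - x0) - (x - x0) := by abel
      rw [h1]; exact Submodule.sub_mem _ (hmem k) hx
    rw [hspan, Submodule.mem_span_range_iff_exists_fun] at hxk
    obtain ⟨cc, hcc⟩ := hxk
    have hccβ : ∀ i, cc i = β i := by
      intro i
      have h1 : (xhat k - x) ⬝ᵥ H.mulVec (q i) = cc i * (q i ⬝ᵥ H.mulVec (q i)) := by
        rw [← hcc, sum_smul_dot]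
        exact Finset.sum_eq_single_of_mem i (Finset.mem_univ i)
          (fun j _ hij => by rw [hconj j i hij, mul_zero])
      have h2 : (xhat k - x) ⬝ᵥ H.mulVec (q i) = -(g ⬝ᵥ q i) := by
        rw [dot_mulVec_symm hs]
        have h3 : H.mulVec (xhat k - x) = ghat - g := by
          rw [Matrix.mulVec_sub, hghat, hg]; abel
        rw [h3, dotProduct_sub, dotProduct_comm (q i) ghat, hgorth _ (hqmemk i),
          dotProduct_comm (q i) g]
        ring
      rw [hβ]
      rw [eq_div_iff (hdne i)]
      rw [← h1, h2]
    rw [← hcc]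
    exact Finset.sum_congr rfl fun i _ => by rw [hccβ i]
  -- basic Q facts
  have hQcol : ∀ u : Fin k → ℝ, Q.mulVec u = ∑ j, u j • q (Fin.rev j) := by
    intro u; funext i
    simp [Matrix.mulVec, dotProduct, hQ, Finset.sum_apply, mul_comm]
  have hQT : ∀ w : Fin n → ℝ, Qᵀ.mulVec w = fun j => q (Fin.rev j) ⬝ᵥ w := by
    intro w; funext j
    simp [Matrix.mulVec, dotProduct, Matrix.transpose_apply, hQ]
  have hQinj : ∀ u : Fin k → ℝ, Q.mulVec u = 0 → u = 0 := by
    intro u hu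
    rw [hQcol] at hu
    have hind' := Fintype.linearIndependent_iff.mp (hind.comp Fin.rev Fin.rev_injective)
    funext j
    exact hind' u (by simpa [Function.comp] using hu) j
  have hMdet : IsUnit (Qᵀ * Q).det := by
    rw [← Matrix.isUnit_iff_isUnit_det, ← Matrix.mulVec_injective_iff_isUnit]
    intro u v huv
    have h0 : (Qᵀ * Q).mulVec (u - v) = 0 := by
      rw [Matrix.mulVec_sub, huv, sub_self]
    have h1 : Q.mulVec (u - v) ⬝ᵥ Q.mulVec (u - v) = 0 := by
      have h2 : (u - v) ⬝ᵥ (Qᵀ * Q).mulVec (u - v) = 0 := by rw [h0, dotProduct_zero]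
      rw [← Matrix.mulVec_mulVec, Matrix.dotProduct_mulVec, Matrix.vecMul_transpose] at h2
      exact h2
    exact sub_eq_zero.mp (hQinj _ (dotProduct_self_eq_zero.mp h1))
  have hM1 : (Qᵀ * Q) * (Qᵀ * Q)⁻¹ = 1 := Matrix.mul_nonsing_inv _ hMdet
  have hM2 : (Qᵀ * Q)⁻¹ * (Qᵀ * Q) = 1 := Matrix.nonsing_inv_mul _ hMdet
  -- the conjugate matrix is diagonal
  set dd : Fin k → ℝ := fun j => q (Fin.rev j) ⬝ᵥ H.mulVec (q (Fin.rev j)) with hdd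
  have hddne : ∀ j, dd j ≠ 0 := fun j => hdne _
  have hNapply : ∀ i j, (Qᵀ * H * Q) i j = q (Fin.rev i) ⬝ᵥ H.mulVec (q (Fin.rev j)) := by
    intro i j
    rw [Matrix.mul_assoc, Matrix.mul_apply]
    simp only [Matrix.transpose_apply, hQ, Matrix.mul_apply, dotProduct, Matrix.mulVec]
  have hN : Qᵀ * H * Q = Matrix.diagonal dd := by
    ext i j
    rw [hNapply, Matrix.diagonal_apply]
    by_cases hij : i = j
    · subst hij; rw [if_pos rfl]
    · rw [if_neg hij]
      exact hconj _ _ fun h => hij (Fin.rev_injective h)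
  have hNinv : (Qᵀ * H * Q)⁻¹ = Matrix.diagonal fun j => (dd j)⁻¹ := by
    apply Matrix.inv_eq_right_inv
    rw [hN, Matrix.diagonal_mul_diagonal]
    ext i j
    rcases eq_or_ne i j with rfl | hij
    · simp [Matrix.one_apply_eq, mul_inv_cancel₀ (hddne i)]
    · simp [Matrix.diagonal_apply_ne _ hij, Matrix.one_apply_ne hij]
  have hN1 : (Qᵀ * H * Q)⁻¹ * (Qᵀ * H * Q) = 1 := by
    rw [hNinv, hN, Matrix.diagonal_mul_diagonal]
    ext i j
    rcases eq_or_ne i j with rfl | hij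
    · simp [Matrix.one_apply_eq, inv_mul_cancel₀ (hddne i)]
    · simp [Matrix.diagonal_apply_ne _ hij, Matrix.one_apply_ne hij]
  -- pointwise formula for B
  have hFB : ∀ v : Fin n → ℝ, B.mulVec v =
      σ • (v - Q.mulVec ((Qᵀ * Q)⁻¹.mulVec (Qᵀ.mulVec v)))
        + H.mulVec (Q.mulVec ((Qᵀ * H * Q)⁻¹.mulVec (Qᵀ.mulVec (H.mulVec v)))) := by
    intro v
    rw [hB]
    simp only [Matrix.add_mulVec, Matrix.smul_mulVec, Matrix.sub_mulVec,
      Matrix.one_mulVec, ← Matrix.mulVec_mulVec]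
  -- B acts as H on the range of Q
  have hBQ : ∀ u : Fin k → ℝ, B.mulVec (Q.mulVec u) = H.mulVec (Q.mulVec u) := by
    intro u
    rw [hFB]
    have e1 : (Qᵀ * Q)⁻¹.mulVec (Qᵀ.mulVec (Q.mulVec u)) = u := by
      rw [Matrix.mulVec_mulVec, Matrix.mulVec_mulVec, Matrix.mul_assoc, hM2,
        Matrix.one_mulVec]
    have e2 : (Qᵀ * H * Q)⁻¹.mulVec (Qᵀ.mulVec (H.mulVec (Q.mulVec u))) = u := by
      rw [Matrix.mulVec_mulVec, Matrix.mulVec_mulVec, Matrix.mulVec_mulVec,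
        Matrix.mul_assoc ((Qᵀ * H * Q)⁻¹) Qᵀ H, Matrix.mul_assoc ((Qᵀ * H * Q)⁻¹) (Qᵀ * H) Q,
        hN1, Matrix.one_mulVec]
    rw [e1, e2, sub_self, smul_zero, zero_add]
  have hQTg : Qᵀ.mulVec ghat = 0 := by
    rw [hQT]
    funext j
    simp only [Pi.zero_apply]
    rw [dotProduct_comm]
    exact hgorth _ (hqmemk _)
  have hk0 : 0 < k := hk
  set j0 : Fin k := ⟨0, hk0⟩ with hj0
  have hrevj0 : Fin.rev j0 = ⟨k - 1, by omega⟩ := by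
    apply Fin.ext
    simp [Fin.val_rev, hj0]
  have hqlast' : qlast = q (Fin.rev j0) := by rw [hqlast, hrevj0]
  have hQsingle : ∀ e : ℝ, Q.mulVec (Pi.single j0 e) = e • q (Fin.rev j0) := by
    intro e
    rw [hQcol]
    rw [Finset.sum_eq_single_of_mem j0 (Finset.mem_univ _)
      (fun b _ hb => by rw [Pi.single_eq_of_ne hb, zero_smul])]
    rw [Pi.single_eq_same]
  have hQTHg : Qᵀ.mulVec (H.mulVec ghat) = Pi.single j0 (qlast ⬝ᵥ H.mulVec ghat) := by
    rw [hQT]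
    funext j
    rcases eq_or_ne j j0 with rfl | hj
    · rw [Pi.single_eq_same, hqlast']
    · rw [Pi.single_eq_of_ne hj, dot_mulVec_symm hs]
      refine hgorth _ (hHqmem _ k ?_)
      have hjv : (j : ℕ) ≠ 0 := fun h => hj (Fin.ext h)
      have hjlt := j.2
      have hrv : ((Fin.rev j) : ℕ) = k - ((j : ℕ) + 1) := Fin.val_rev j
      omega
  have hddj0 : dd j0 = qlast ⬝ᵥ H.mulVec qlast := by
    show q (Fin.rev j0) ⬝ᵥ H.mulVec (q (Fin.rev j0)) = qlast ⬝ᵥ H.mulVec qlast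
    rw [← hqlast']
  have hBg : B.mulVec ghat = σ • ghat + α • H.mulVec qlast := by
    rw [hFB, hQTg, Matrix.mulVec_zero, Matrix.mulVec_zero, sub_zero, hQTHg, hNinv,
      Matrix.diagonal_mulVec_single, hQsingle, ← hqlast']
    congr 1
    rw [Matrix.mulVec_smul]
    congr 1
    rw [hα, hddj0, dot_mulVec_symm hs qlast ghat]
    rw [div_eq_inv_mul]
  have hql2 : Q.mulVec (Pi.single j0 1) = qlast := by rw [hQsingle, one_smul, hqlast']
  have hBqlast : B.mulVec qlast = H.mulVec qlast := by rw [← hql2, hBQ]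
  have hwQ : (∑ i, β i • q i) = Q.mulVec (fun j => β (Fin.rev j)) := by
    rw [hQcol]
    refine Fintype.sum_equiv Fin.revPerm _ _ fun i => ?_
    simp [Fin.rev_rev]
  have hBw : B.mulVec (∑ i, β i • q i) = H.mulVec (∑ i, β i • q i) := by
    rw [hwQ, hBQ]
  set pstar := (1/σ) • (-ghat + α • qlast) + ∑ i, β i • q i with hpstar
  have hBp : B.mulVec pstar = -g := by
    rw [hpstar, Matrix.mulVec_add, Matrix.mulVec_smul, Matrix.mulVec_add, Matrix.mulVec_neg,
      Matrix.mulVec_smul, hBg, hBqlast, hBw, hw]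
    have h1 : H.mulVec (xhat k - x) = ghat - g := by
      rw [Matrix.mulVec_sub, hghat, hg]; abel
    rw [h1]
    have h2 : (1/σ : ℝ) • (-(σ • ghat + α • H.mulVec qlast) + α • H.mulVec qlast) = -ghat := by
      match_scalars <;> field_simp <;> ring
    rw [h2]
    abel
  have hN2 : (Qᵀ * H * Q) * (Qᵀ * H * Q)⁻¹ = 1 := by
    rw [hNinv, hN, Matrix.diagonal_mul_diagonal]
    ext i j
    rcases eq_or_ne i j with rfl | hij
    · simp [Matrix.one_apply_eq, mul_inv_cancel₀ (hddne i)]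
    · simp [Matrix.diagonal_apply_ne _ hij, Matrix.one_apply_ne hij]
  have hQTB : Qᵀ * B = Qᵀ * H := by
    rw [hB, Matrix.mul_add, Matrix.mul_smul, Matrix.mul_sub, Matrix.mul_one]
    have e1 : Qᵀ * (Q * (Qᵀ * Q)⁻¹ * Qᵀ) = Qᵀ := by
      simp only [← Matrix.mul_assoc]
      rw [hM1, Matrix.one_mul]
    have e2 : Qᵀ * (H * Q * (Qᵀ * H * Q)⁻¹ * Qᵀ * H) = Qᵀ * H := by
      simp only [← Matrix.mul_assoc]
      rw [hN2, Matrix.one_mul]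
    rw [e1, e2, sub_self, smul_zero, zero_add]
  have hBinj : ∀ v : Fin n → ℝ, B.mulVec v = 0 → v = 0 := by
    intro v hv
    have hz : (Qᵀ * H).mulVec v = 0 := by
      calc (Qᵀ * H).mulVec v = (Qᵀ * B).mulVec v := by rw [hQTB]
        _ = Qᵀ.mulVec (B.mulVec v) := (Matrix.mulVec_mulVec _ _ _).symm
        _ = 0 := by rw [hv, Matrix.mulVec_zero]
    have hz' : Qᵀ.mulVec (H.mulVec v) = 0 := by rw [Matrix.mulVec_mulVec]; exact hz
    have hsv : σ • (v - Q.mulVec ((Qᵀ * Q)⁻¹.mulVec (Qᵀ.mulVec v))) = 0 := by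
      have hfb := hFB v
      rw [hv, hz', Matrix.mulVec_zero, Matrix.mulVec_zero, Matrix.mulVec_zero, add_zero] at hfb
      exact hfb.symm
    have hveq : v = Q.mulVec ((Qᵀ * Q)⁻¹.mulVec (Qᵀ.mulVec v)) :=
      sub_eq_zero.mp ((smul_eq_zero.mp hsv).resolve_left hσ')
    set u := (Qᵀ * Q)⁻¹.mulVec (Qᵀ.mulVec v) with hu
    have hNu : (Qᵀ * H * Q).mulVec u = 0 := by
      rw [← Matrix.mulVec_mulVec, ← hveq]
      exact hz
    have hu0 : u = 0 := by
      have h3 : (Qᵀ * H * Q)⁻¹.mulVec ((Qᵀ * H * Q).mulVec u) = 0 := by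
        rw [hNu, Matrix.mulVec_zero]
      rw [Matrix.mulVec_mulVec, hN1, Matrix.one_mulVec] at h3
      exact h3
    rw [hveq, hu0, Matrix.mulVec_zero]
  intro p
  constructor
  · intro hp
    have h0 : B.mulVec (p - pstar) = 0 := by
      rw [Matrix.mulVec_sub, hp, hBp, sub_self]
    exact sub_eq_zero.mp (hBinj _ h0)
  · intro hp
    rw [hp]
    exact hBp
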